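/- For all real s and t, the generating function of the Laplace polynomials Q_k satisfies Σ_{k=0}^{∞} Q_k(t) · s^{k+1} / (k+1)! = √(2π) · e^{(s+t)²/2} · (Φ(s+t) − Φ(t)), where Φ is the standard normal cumulative distribution function. -/

import Mathlib

open MeasureTheory Polynomial

/-- The standard normal cumulative distribution function. -/
noncomputable def gaussCdf (t : ℝ) : ℝ :=
  ∫ s in Set.Iic t, Real.exp (-s ^ 2 / 2) / Real.sqrt (2 * Real.pi)

/-- The Laplace polynomials `P_k`. -/
noncomputable def laplaceP : ℕ → Polynomial ℝ
  | 0 => 1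
  | k + 1 => X * laplaceP k + derivative (laplaceP k)

/-- The Laplace polynomials `Q_k`. -/
noncomputable def laplaceQ : ℕ → Polynomial ℝ
  | 0 => 1
  | k + 1 => laplaceP (k + 1) + derivative (laplaceQ k)

/-- Hermite-like companion family. -/
noncomputable def laplaceR : ℕ → Polynomial ℝ
  | 0 => 1
  | k + 1 => derivative (laplaceR k) - X * laplaceR k

/-- Complex version, with parameter `a`. -/
noncomputable def hermC (a : ℂ) : ℕ → Polynomial ℂ
  | 0 => 1
  | k + 1 => C a * X * hermC a k + derivative (hermC a k)

lemma laplaceP_map (n : ℕ) : (laplaceP n).map (algebraMap ℝ ℂ) = hermC 1 n := by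
  induction n with
  | zero => simp [laplaceP, hermC]
  | succ n ih =>
    simp only [laplaceP, hermC, Polynomial.map_add, Polynomial.map_mul, Polynomial.map_X, Polynomial.map_one, Polynomial.C_1,
      ← Polynomial.derivative_map, ih]
    ring

lemma laplaceR_map (n : ℕ) : (laplaceR n).map (algebraMap ℝ ℂ) = hermC (-1) n := by
  induction n with
  | zero => simp [laplaceR, hermC]
  | succ n ih =>
    simp only [laplaceR, hermC, Polynomial.map_sub, ← Polynomial.derivative_map, ih,
      Polynomial.map_mul, Polynomial.map_ofNat, map_X, map_neg, map_one, Polynomial.map_one]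
    ring

lemma differentiable_expQuad (a : ℂ) : Differentiable ℂ (fun z : ℂ => Complex.exp (a * z ^ 2 / 2)) := by
  fun_prop

lemma deriv_expQuad (a z : ℂ) :
    HasDerivAt (fun z : ℂ => Complex.exp (a * z ^ 2 / 2)) (a * z * Complex.exp (a * z ^ 2 / 2)) z := by
  have h1 : HasDerivAt (fun z : ℂ => a * z ^ 2 / 2) (a * z) z := by
    have := ((hasDerivAt_pow 2 z).const_mul a).div_const 2
    simpa using this.congr_deriv (by ring)
  simpa [mul_comm] using h1.cexp

lemma iteratedDeriv_expQuad (a : ℂ) (n : ℕ) :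
    iteratedDeriv n (fun z : ℂ => Complex.exp (a * z ^ 2 / 2)) =
      fun z => (hermC a n).eval z * Complex.exp (a * z ^ 2 / 2) := by
  induction n with
  | zero => simp [hermC]
  | succ n ih =>
    rw [iteratedDeriv_succ, ih]
    funext z
    have h1 : HasDerivAt (fun z : ℂ => (hermC a n).eval z * Complex.exp (a * z ^ 2 / 2))
        ((hermC a (n+1)).eval z * Complex.exp (a * z ^ 2 / 2)) z := by
      have := ((hermC a n).hasDerivAt z).mul (deriv_expQuad a z)
      refine this.congr_deriv ?_
      simp [hermC]
      ring
    exact h1.deriv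

lemma hasSum_hermC (a t v : ℂ) :
    HasSum (fun n : ℕ => (hermC a n).eval t * v ^ n / (n.factorial : ℂ))
      (Complex.exp (a * (v * t) + a * v ^ 2 / 2)) := by
  have h := Complex.hasSum_taylorSeries_of_entire (differentiable_expQuad a) t (t + v)
  simp only [iteratedDeriv_expQuad, add_sub_cancel_left, smul_eq_mul] at h
  have h2 := h.mul_right (Complex.exp (-(a * t ^ 2 / 2)))
  rw [← Complex.exp_add] at h2
  have e1 : a * (t + v) ^ 2 / 2 + -(a * t ^ 2 / 2) = a * (v * t) + a * v ^ 2 / 2 := by ring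
  rw [e1] at h2
  convert h2 using 2 with n
  · rfl
  rw [Complex.exp_neg]
  field_simp

lemma eval_map_C (p : Polynomial ℝ) (t : ℝ) :
    (p.map (algebraMap ℝ ℂ)).eval (t : ℂ) = ((p.eval t : ℝ) : ℂ) := by
  rw [Polynomial.eval_map]
  exact Polynomial.eval₂_at_apply _ t

lemma hasSum_P (t v : ℝ) :
    HasSum (fun n : ℕ => (laplaceP n).eval t * v ^ n / (n.factorial : ℝ))
      (Real.exp (v * t + v ^ 2 / 2)) := by
  rw [← Complex.hasSum_ofReal]
  have h := hasSum_hermC 1 t v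
  simp only [one_mul] at h
  convert h using 2 with n
  · push_cast
    rw [← laplaceP_map, eval_map_C]
  · push_cast [Complex.ofReal_exp]
    norm_num

lemma hasSum_R (t v : ℝ) :
    HasSum (fun n : ℕ => (laplaceR n).eval t * v ^ n / (n.factorial : ℝ))
      (Real.exp (-(v * t) - v ^ 2 / 2)) := by
  rw [← Complex.hasSum_ofReal]
  have h := hasSum_hermC (-1) t v
  convert h using 2 with n
  · push_cast
    rw [← laplaceR_map, eval_map_C]
  · push_cast [Complex.ofReal_exp]
    ring_nf

/-- absolute-value summability of the generating coefficients. -/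
lemma summable_abs_coeff {c : ℕ → ℝ} (h : ∀ v : ℝ, Summable fun n : ℕ => c n * v ^ n / (n.factorial : ℝ))
    {x : ℝ} (hx : 0 ≤ x) : Summable fun n : ℕ => |c n| * x ^ n / (n.factorial : ℝ) := by
  have h1 : Summable fun n : ℕ => |c n| * (x + 1) ^ n / (n.factorial : ℝ) := by
    have := (summable_abs_iff.2 (h (x + 1)))
    refine this.congr fun n => ?_
    rw [abs_div, abs_mul, abs_pow, abs_of_nonneg (by linarith : (0:ℝ) ≤ x + 1),
      abs_of_nonneg (by positivity : (0:ℝ) ≤ (n.factorial : ℝ))]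
  refine h1.of_nonneg_of_le (fun n => by positivity) fun n => ?_
  gcongr
  linarith

lemma hasSum_setIntegral {a b : ℝ} (hab : a ≤ b) (c : ℕ → ℝ)
    (hsum : ∀ v : ℝ, Summable fun n : ℕ => c n * v ^ n / (n.factorial : ℝ))
    (g : ℝ → ℝ) (hg : ∀ σ : ℝ, HasSum (fun n : ℕ => c n * σ ^ n / (n.factorial : ℝ)) (g σ)) :
    HasSum (fun n : ℕ => ∫ σ in Set.Ioc a b, c n * σ ^ n / (n.factorial : ℝ))
      (∫ σ in Set.Ioc a b, g σ) := by
  set M : ℝ := max |a| |b| with hM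
  have hM0 : 0 ≤ M := le_trans (abs_nonneg a) (le_max_left _ _)
  have habs : ∀ σ ∈ Set.Ioc a b, |σ| ≤ M := by
    intro σ hσ
    rcases abs_cases σ with ⟨h1, _⟩ | ⟨h1, _⟩
    · rw [h1]; exact le_trans (le_trans hσ.2 (le_abs_self b)) (le_max_right _ _)
    · rw [h1]; refine le_trans ?_ (le_max_left _ _)
      rw [← abs_neg]; exact le_trans (neg_le_neg hσ.1.le) (le_abs_self (-a))
  have hFin : volume (Set.Ioc a b) < ⊤ := by
    rw [Real.volume_Ioc]; exact ENNReal.ofReal_lt_top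
  have hF_int : ∀ n : ℕ, Integrable (fun σ : ℝ => c n * σ ^ n / (n.factorial : ℝ))
      (volume.restrict (Set.Ioc a b)) := by
    intro n
    exact (Continuous.integrableOn_Ioc (by continuity))
  have key : ∀ n : ℕ, (∫ σ in Set.Ioc a b, ‖c n * σ ^ n / (n.factorial : ℝ)‖) ≤
      (|c n| * M ^ n / (n.factorial : ℝ)) * (b - a) := by
    intro n
    have h1 : ‖∫ σ in Set.Ioc a b, ‖c n * σ ^ n / (n.factorial : ℝ)‖‖ ≤
        (|c n| * M ^ n / (n.factorial : ℝ)) * (volume (Set.Ioc a b)).toReal := by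
      refine MeasureTheory.norm_setIntegral_le_of_norm_le_const hFin ?_
      · intro σ hσ
        rw [norm_norm, Real.norm_eq_abs, abs_div, abs_mul, abs_pow,
          abs_of_nonneg (by positivity : (0:ℝ) ≤ (n.factorial : ℝ))]
        gcongr
        exact habs σ hσ

    rw [Real.norm_of_nonneg (MeasureTheory.integral_nonneg fun σ => norm_nonneg _)] at h1
    rwa [Real.volume_Ioc, ENNReal.toReal_ofReal (by linarith)] at h1
  have hF_sum : Summable fun n : ℕ => ∫ σ in Set.Ioc a b, ‖c n * σ ^ n / (n.factorial : ℝ)‖ := by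
    refine Summable.of_nonneg_of_le (fun n => MeasureTheory.integral_nonneg fun σ => norm_nonneg _)
      key ?_
    exact (summable_abs_coeff hsum hM0).mul_right _
  have h := MeasureTheory.hasSum_integral_of_summable_integral_norm hF_int hF_sum
  have e : (∫ σ in Set.Ioc a b, ∑' n : ℕ, c n * σ ^ n / (n.factorial : ℝ)) =
      ∫ σ in Set.Ioc a b, g σ :=
    MeasureTheory.integral_congr_ae (Filter.Eventually.of_forall fun σ => (hg σ).tsum_eq)
  exact e ▸ h

lemma hasSum_intervalIntegral_R (s t : ℝ) :
    HasSum (fun k : ℕ => (laplaceR k).eval t * s ^ (k + 1) / ((k + 1).factorial : ℝ))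
      (∫ σ in (0:ℝ)..s, Real.exp (-(σ * t) - σ ^ 2 / 2)) := by
  set c : ℕ → ℝ := fun k => (laplaceR k).eval t with hc
  set g : ℝ → ℝ := fun σ => Real.exp (-(σ * t) - σ ^ 2 / 2) with hgdef
  have hg : ∀ σ : ℝ, HasSum (fun n : ℕ => c n * σ ^ n / (n.factorial : ℝ)) (g σ) :=
    fun σ => hasSum_R t σ
  have hsum : ∀ v : ℝ, Summable fun n : ℕ => c n * v ^ n / (n.factorial : ℝ) :=
    fun v => (hg v).summable
  have hIv : ∀ k : ℕ, (∫ σ in (0:ℝ)..s, c k * σ ^ k / (k.factorial : ℝ)) =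
      c k * s ^ (k + 1) / ((k + 1).factorial : ℝ) := by
    intro k
    simp_rw [mul_div_right_comm]
    rw [intervalIntegral.integral_const_mul, integral_pow]
    have hkf : ((k + 1).factorial : ℝ) = (k + 1) * (k.factorial : ℝ) := by
      rw [Nat.factorial_succ]; push_cast; ring
    rw [hkf]
    have h1 : (0:ℝ) ^ (k + 1) = 0 := zero_pow (Nat.succ_ne_zero k)
    rw [h1, sub_zero, div_mul_div_comm, mul_comm ((k.factorial : ℝ)), mul_div_assoc]
    ring
  rcases le_total 0 s with hs | hs
  · rw [intervalIntegral.integral_of_le hs]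
    have h := hasSum_setIntegral hs c hsum g hg
    have hco : (fun k : ℕ => ∫ σ in Set.Ioc (0:ℝ) s, c k * σ ^ k / (k.factorial : ℝ)) =
        fun k : ℕ => c k * s ^ (k + 1) / ((k + 1).factorial : ℝ) :=
      funext fun k => by rw [← intervalIntegral.integral_of_le hs]; exact hIv k
    exact hco ▸ h
  · rw [intervalIntegral.integral_of_ge hs]
    have h := (hasSum_setIntegral hs c hsum g hg).neg
    have hco : (fun k : ℕ => -∫ σ in Set.Ioc s 0, c k * σ ^ k / (k.factorial : ℝ)) =
        fun k : ℕ => c k * s ^ (k + 1) / ((k + 1).factorial : ℝ) :=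
      funext fun k => by rw [← intervalIntegral.integral_of_ge hs]; exact hIv k
    exact hco ▸ h

lemma dP (j : ℕ) : derivative (laplaceP j) = laplaceP (j + 1) - X * laplaceP j := by
  rw [show laplaceP (j+1) = X * laplaceP j + derivative (laplaceP j) from rfl]; ring

lemma dR (k : ℕ) : derivative (laplaceR k) = laplaceR (k + 1) + X * laplaceR k := by
  rw [show laplaceR (k+1) = derivative (laplaceR k) - X * laplaceR k from rfl]; ring

lemma laplaceQ_eq (n : ℕ) :
    laplaceQ n = ∑ j ∈ Finset.range (n + 1),
      C (((n + 1).choose j : ℕ) : ℝ) * laplaceP j * laplaceR (n - j) := by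
  induction n with
  | zero => simp [laplaceQ, laplaceP, laplaceR]
  | succ n ih =>
    rw [show laplaceQ (n + 1) = laplaceP (n + 1) + derivative (laplaceQ n) from rfl, ih,
      derivative_sum]
    have hterm : ∀ j ∈ Finset.range (n + 1),
        derivative (C (((n + 1).choose j : ℕ) : ℝ) * laplaceP j * laplaceR (n - j)) =
          C (((n + 1).choose j : ℕ) : ℝ) * laplaceP (j + 1) * laplaceR (n - j)
          + C (((n + 1).choose j : ℕ) : ℝ) * laplaceP j * laplaceR (n - j + 1) := by
      intro j hj
      rw [derivative_mul, derivative_mul, derivative_C, dP, dR]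
      ring
    rw [Finset.sum_congr rfl hterm, Finset.sum_add_distrib]
    -- Abbreviations
    set A := ∑ j ∈ Finset.range (n + 1),
      C (((n + 1).choose j : ℕ) : ℝ) * laplaceP (j + 1) * laplaceR (n - j) with hA
    set B := ∑ j ∈ Finset.range (n + 1),
      C (((n + 1).choose j : ℕ) : ℝ) * laplaceP j * laplaceR (n - j + 1) with hB
    -- Left side split
    have hsplit : ∀ j ∈ Finset.range (n + 1),
        C (((n + 2).choose (j + 1) : ℕ) : ℝ) * laplaceP (j + 1) * laplaceR (n + 1 - (j + 1)) =
          C (((n + 1).choose j : ℕ) : ℝ) * laplaceP (j + 1) * laplaceR (n - j)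
          + C (((n + 1).choose (j + 1) : ℕ) : ℝ) * laplaceP (j + 1) * laplaceR (n - j) := by
      intro j hj
      rw [Nat.succ_sub_succ, Nat.choose_succ_succ (n + 1) j, Nat.cast_add, map_add]
      ring
    rw [Finset.sum_range_succ', Finset.sum_congr rfl hsplit, Finset.sum_add_distrib]
    set Cs := ∑ j ∈ Finset.range (n + 1),
      C (((n + 1).choose (j + 1) : ℕ) : ℝ) * laplaceP (j + 1) * laplaceR (n - j) with hCs
    have h0 : C (((n + 2).choose 0 : ℕ) : ℝ) * laplaceP 0 * laplaceR (n + 1 - 0) =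
        laplaceR (n + 1) := by
      simp [laplaceP]
    rw [h0]
    -- Now need : A + Cs + laplaceR (n+1) = laplaceP (n+1) + (A + B)
    -- i.e. Cs + laplaceR (n+1) = laplaceP (n+1) + B
    have hkey : Cs + laplaceR (n + 1) = laplaceP (n + 1) + B := by
      have hCs' : Cs = (∑ j ∈ Finset.range n,
          C (((n + 1).choose (j + 1) : ℕ) : ℝ) * laplaceP (j + 1) * laplaceR (n - j))
          + laplaceP (n + 1) := by
        rw [hCs, Finset.sum_range_succ]
        simp [Nat.choose_self, Nat.sub_self, laplaceR]
      have hB' : B = (∑ j ∈ Finset.range n,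
          C (((n + 1).choose (j + 1) : ℕ) : ℝ) * laplaceP (j + 1) * laplaceR (n - j))
          + laplaceR (n + 1) := by
        rw [hB, Finset.sum_range_succ']
        have e : ∀ j ∈ Finset.range n,
            C (((n + 1).choose (j + 1) : ℕ) : ℝ) * laplaceP (j + 1) * laplaceR (n - (j + 1) + 1) =
            C (((n + 1).choose (j + 1) : ℕ) : ℝ) * laplaceP (j + 1) * laplaceR (n - j) := by
          intro j hj
          have : n - (j + 1) + 1 = n - j := by
            have := Finset.mem_range.mp hj
            omega
          rw [this]
        rw [Finset.sum_congr rfl e]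
        simp [laplaceP]
      rw [hCs', hB']
      ring
    -- finish
    rw [← hA]
    linear_combination -hkey

lemma cauchy_term (s t : ℝ) (n : ℕ) :
    (∑ kl ∈ Finset.HasAntidiagonal.antidiagonal n,
      ((laplaceP kl.1).eval t * s ^ kl.1 / (kl.1.factorial : ℝ)) *
        ((laplaceR kl.2).eval t * s ^ (kl.2 + 1) / ((kl.2 + 1).factorial : ℝ))) =
    (laplaceQ n).eval t * s ^ (n + 1) / ((n + 1).factorial : ℝ) := by
  rw [Finset.Nat.sum_antidiagonal_eq_sum_range_succ_mk]
  have hQ : (laplaceQ n).eval t =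
      ∑ j ∈ Finset.range (n + 1),
        (((n + 1).choose j : ℕ) : ℝ) * (laplaceP j).eval t * (laplaceR (n - j)).eval t := by
    rw [laplaceQ_eq, Polynomial.eval_finset_sum]
    exact Finset.sum_congr rfl fun j hj => by simp [Polynomial.eval_mul]
  rw [hQ, Finset.sum_mul, Finset.sum_div]
  refine Finset.sum_congr rfl fun j hj => ?_
  have hjn : j ≤ n := by
    have := Finset.mem_range.mp hj; omega
  obtain ⟨m, rfl⟩ : ∃ m, n = j + m := ⟨n - j, by omega⟩
  simp only [show j + m - j = m from by omega]
  have hchoose : ((j + m + 1).factorial : ℝ) =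
      (((j + m + 1).choose j : ℕ) : ℝ) * (j.factorial : ℝ) * ((m + 1).factorial : ℝ) := by
    have h1 : j ≤ j + m + 1 := by omega
    have h2 := Nat.choose_mul_factorial_mul_factorial h1
    have h3 : j + m + 1 - j = m + 1 := by omega
    rw [h3] at h2
    exact_mod_cast h2.symm
  have hfj : (j.factorial : ℝ) ≠ 0 := by positivity
  have hfm : ((m + 1).factorial : ℝ) ≠ 0 := by positivity
  have hc0 : (((j + m + 1).choose j : ℕ) : ℝ) ≠ 0 := by
    have h := Nat.choose_pos (show j ≤ j + m + 1 by omega)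
    positivity
  rw [hchoose]
  field_simp
  ring

/-- For all real `s` and `t`,
`Σ_k Q_k(t)·s^{k+1}/(k+1)! = √(2π)·e^{(s+t)²/2}·(Φ(s+t) − Φ(t))`. -/
theorem laplaceQ_genFun (s t : ℝ) :
    HasSum (fun k : ℕ => (laplaceQ k).eval t * s ^ (k + 1) / ((k + 1).factorial : ℝ))
      (Real.sqrt (2 * Real.pi) * Real.exp ((s + t) ^ 2 / 2) *
        (gaussCdf (s + t) - gaussCdf t)) := by
  have hE := hasSum_P t s
  have hH := hasSum_intervalIntegral_R s t
  have hA : Summable fun j : ℕ => ‖(laplaceP j).eval t * s ^ j / (j.factorial : ℝ)‖ := by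
    simp only [Real.norm_eq_abs]
    exact summable_abs_iff.mpr hE.summable
  have hB : Summable fun k : ℕ => ‖(laplaceR k).eval t * s ^ (k + 1) / ((k + 1).factorial : ℝ)‖ := by
    simp only [Real.norm_eq_abs]
    exact summable_abs_iff.mpr hH.summable
  have hprod : HasSum (fun n : ℕ => ∑ kl ∈ Finset.HasAntidiagonal.antidiagonal n,
      ((laplaceP kl.1).eval t * s ^ kl.1 / (kl.1.factorial : ℝ)) *
        ((laplaceR kl.2).eval t * s ^ (kl.2 + 1) / ((kl.2 + 1).factorial : ℝ)))
      (Real.exp (s * t + s ^ 2 / 2) * ∫ σ in (0:ℝ)..s, Real.exp (-(σ * t) - σ ^ 2 / 2)) := by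
    have hsummable := (summable_norm_sum_mul_antidiagonal_of_summable_norm hA hB).of_norm
    have h1 := hsummable.hasSum
    rwa [← tsum_mul_tsum_eq_tsum_sum_antidiagonal_of_summable_norm hA hB, hE.tsum_eq,
      hH.tsum_eq] at h1
  rw [funext (cauchy_term s t)] at hprod
  convert hprod using 1
  -- now prove the value equality
  have hint : Integrable (fun u : ℝ => Real.exp (-u ^ 2 / 2) / Real.sqrt (2 * Real.pi)) := by
    have h1 : Integrable (fun u : ℝ => Real.exp (-(1/2 : ℝ) * u ^ 2)) :=
      integrable_exp_neg_mul_sq (by norm_num)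
    have h2 : (fun u : ℝ => Real.exp (-u ^ 2 / 2)) = fun u : ℝ => Real.exp (-(1/2 : ℝ) * u ^ 2) :=
      funext fun u => by ring_nf
    exact (h2 ▸ h1).div_const _
  have hdiff : gaussCdf (s + t) - gaussCdf t =
      ∫ u in t..(s + t), Real.exp (-u ^ 2 / 2) / Real.sqrt (2 * Real.pi) := by
    unfold gaussCdf
    exact intervalIntegral.integral_Iic_sub_Iic hint.integrableOn hint.integrableOn
  rw [hdiff, intervalIntegral.integral_div]
  have hsqrt : Real.sqrt (2 * Real.pi) ≠ 0 := by
    have := Real.pi_pos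
    positivity
  rw [show Real.sqrt (2 * Real.pi) * Real.exp ((s + t) ^ 2 / 2) *
      ((∫ u in t..(s + t), Real.exp (-u ^ 2 / 2)) / Real.sqrt (2 * Real.pi)) =
      Real.exp ((s + t) ^ 2 / 2) * ∫ u in t..(s + t), Real.exp (-u ^ 2 / 2) from by
    field_simp]
  have hcomp : (∫ u in t..(s + t), Real.exp (-u ^ 2 / 2)) =
      ∫ σ in (0:ℝ)..s, Real.exp (-(σ + t) ^ 2 / 2) := by
    rw [intervalIntegral.integral_comp_add_right (fun u => Real.exp (-u ^ 2 / 2)) t, zero_add]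
  rw [hcomp]
  have hpt : ∀ σ : ℝ, Real.exp (-(σ + t) ^ 2 / 2) =
      Real.exp (-t ^ 2 / 2) * Real.exp (-(σ * t) - σ ^ 2 / 2) := fun σ => by
    rw [← Real.exp_add]; congr 1; ring
  simp_rw [hpt]
  rw [intervalIntegral.integral_const_mul, ← mul_assoc, ← Real.exp_add]
  congr 2
  ring
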